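/- (Lemma.) For all integers k, n ≥ 0 and all scalars x, y, z ∈ 𝕜: P_{k,n}(x, z) = Σ_{a=0}^{n} Ш_{n−a,a}^{↑k} · β_{k,a} · P_{0,a}(y, z) · P_{k,n−a}(x, y)^{↑a} in 𝕜B_∞. -/

import Mathlib

namespace BraidPaper

/-- Relations of the infinite Artin braid group `B_∞`.  The generator with index `n : ℕ`
represents the Artin generator `σ_{n+1}` (so generators are `σ_1, σ_2, …`). -/
def BraidRels : Set (FreeGroup ℕ) :=
  {r | (∃ i : ℕ, r = .of i * .of (i + 1) * .of i * (.of (i + 1) * .of i * .of (i + 1))⁻¹) ∨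
       (∃ i j : ℕ, i + 2 ≤ j ∧ r = .of i * .of j * (.of j * .of i)⁻¹)}

/-- The infinite Artin braid group `B_∞`, presented by generators `σ_1, σ_2, …` and the
braid and far-commutativity relations. -/
abbrev BInf : Type := PresentedGroup BraidRels

/-- The Artin generator `σ i` of `B_∞` (meaningful for `i ≥ 1`). -/
def σ (i : ℕ) : BInf := PresentedGroup.of (i - 1)

lemma rel_eq_one {r : FreeGroup ℕ} (hr : r ∈ BraidRels) : PresentedGroup.mk BraidRels r = 1 := by
  have : r ∈ Subgroup.normalClosure BraidRels := Subgroup.subset_normalClosure hr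
  exact (QuotientGroup.eq_one_iff r).mpr this

lemma gen_braid (i : ℕ) :
    (PresentedGroup.of i : BInf) * .of (i + 1) * .of i = .of (i + 1) * .of i * .of (i + 1) := by
  have h := rel_eq_one (Or.inl ⟨i, rfl⟩)
  rw [map_mul, map_mul, map_mul, map_inv, map_mul, map_mul, mul_inv_eq_one] at h
  exact h

lemma gen_comm {i j : ℕ} (hij : i + 2 ≤ j) :
    (PresentedGroup.of i : BInf) * .of j = .of j * .of i := by
  have h := rel_eq_one (Or.inr ⟨i, j, hij, rfl⟩)
  rw [map_mul, map_mul, map_inv, map_mul, mul_inv_eq_one] at h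
  exact h

/-- The shift endomorphism `↑ℓ : B_∞ → B_∞`, `σ_i ↦ σ_{i+ℓ}`. -/
def shift (l : ℕ) : BInf →* BInf :=
  PresentedGroup.toGroup (f := fun n => (PresentedGroup.of (n + l) : BInf)) (by
    rintro r (⟨i, rfl⟩ | ⟨i, j, hij, rfl⟩) <;>
      simp only [map_mul, map_inv, FreeGroup.lift_apply_of, mul_inv_eq_one]
    · have h1 : i + 1 + l = i + l + 1 := by omega
      rw [h1]; exact gen_braid (i + l)
    · exact gen_comm (by omega : (i + l) + 2 ≤ j + l))

/-- The ascending product `σ_i σ_{i+1} ⋯ σ_{i+l-1}` (of `l` factors). -/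
def asc (i l : ℕ) : BInf := ((List.range l).map fun t => σ (i + t)).prod

/-- The descending product `σ_i σ_{i-1} ⋯ σ_{i-k+1}` (of `k` factors). -/
def desc (i k : ℕ) : BInf := ((List.range k).map fun t => σ (i - t)).prod

/-- The block transposition braid
`β_{k,l} = (σ_k σ_{k+1} ⋯ σ_{k+l-1})(σ_{k-1} σ_k ⋯ σ_{k+l-2}) ⋯ (σ_1 σ_2 ⋯ σ_l)`,
with `β_{k,0} = β_{0,l} = 1`. -/
def β (k l : ℕ) : BInf := ((List.range k).map fun r => asc (k - r) l).prod

/-- The positive (Garside) lift `ω_a = β_{1,1} β_{2,1} ⋯ β_{a-1,1}` of the longest element of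
the symmetric group `S_a`, with `ω_0 = ω_1 = 1`. -/
def ω (a : ℕ) : BInf := ((List.range (a - 1)).map fun t => β (t + 1) 1).prod

/-- The copy of the braid group `B_n` inside `B_∞`: the subgroup generated by
`σ_1, …, σ_{n-1}`. -/
def BSub (n : ℕ) : Subgroup BInf := Subgroup.closure {g | ∃ i, 1 ≤ i ∧ i < n ∧ g = σ i}


variable (𝕜 : Type) [CommRing 𝕜]

/-- The canonical embedding of `B_∞` into its group algebra `𝕜B_∞`. -/
noncomputable def ι (g : BInf) : MonoidAlgebra 𝕜 BInf := MonoidAlgebra.of 𝕜 BInf g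

/-- The shift `↑ℓ` extended (as an algebra homomorphism) to the group algebra `𝕜B_∞`. -/
noncomputable def shiftA (l : ℕ) : MonoidAlgebra 𝕜 BInf →ₐ[𝕜] MonoidAlgebra 𝕜 BInf :=
  MonoidAlgebra.mapDomainAlgHom 𝕜 𝕜 (shift l)

/-- The braid shuffle elements `Ш_{m,n} ∈ 𝕜B_∞` (for natural `m, n`), determined by
`Ш_{0,n} = Ш_{m,0} = 1` and the Pascal-type recursion
`Ш_{m,n} = Ш_{m-1,n} + Ш_{m,n-1} β_{m,1}^{↑(n-1)}`. -/
noncomputable def Sh : ℕ → ℕ → MonoidAlgebra 𝕜 BInf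
  | 0, _ => 1
  | _ + 1, 0 => 1
  | m + 1, n + 1 => Sh m (n + 1) + Sh (m + 1) n * ι 𝕜 (shift n (β (m + 1) 1))
  termination_by m n => (m, n)

/-- The braid shuffle elements `Ш_{m,n} ∈ 𝕜B_∞` for integer indices: `Ш_{m,n} = 0` whenever
`m < 0` or `n < 0`. -/
noncomputable def ShZ (m n : ℤ) : MonoidAlgebra 𝕜 BInf :=
  if 0 ≤ m ∧ 0 ≤ n then Sh 𝕜 m.toNat n.toNat else 0

/-- The braid Pochhammer symbol
`P_{k,n}(x,y) = (x - β_{k,1} y)(x - β_{k+1,1} y) ⋯ (x - β_{k+n-1,1} y) ∈ 𝕜B_∞`. -/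
noncomputable def Poch (k n : ℕ) (x y : 𝕜) : MonoidAlgebra 𝕜 BInf :=
  ((List.range n).map fun t =>
    algebraMap 𝕜 (MonoidAlgebra 𝕜 BInf) x - algebraMap 𝕜 (MonoidAlgebra 𝕜 BInf) y * ι 𝕜 (β (k + t) 1)).prod

section Lemmas

open PresentedGroup in
lemma shift_of (l n : ℕ) : shift l (PresentedGroup.of n) = PresentedGroup.of (n + l) :=
  PresentedGroup.toGroup.of _

lemma shift_σ (l : ℕ) {i : ℕ} (hi : 1 ≤ i) : shift l (σ i) = σ (i + l) := by
  unfold σ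
  rw [shift_of]
  congr 1
  omega

lemma σ_braid (i : ℕ) : σ (i+1) * σ (i+2) * σ (i+1) = σ (i+2) * σ (i+1) * σ (i+2) := by
  have h := gen_braid i
  simpa [σ] using h

lemma σ_comm {i j : ℕ} (hi : 1 ≤ i) (h : i + 2 ≤ j) : Commute (σ i) (σ j) := by
  obtain ⟨i', rfl⟩ : ∃ i', i = i' + 1 := ⟨i - 1, by omega⟩
  obtain ⟨j', rfl⟩ : ∃ j', j = j' + 1 := ⟨j - 1, by omega⟩
  exact gen_comm (by omega : i' + 2 ≤ j')

lemma asc_one (i : ℕ) : asc i 1 = σ i := by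
  simp [asc, List.range_succ]

lemma asc_succ (i l : ℕ) : asc i (l+1) = asc i l * σ (i + l) := by
  simp [asc, List.range_succ]

lemma asc_zero (i : ℕ) : asc i 0 = 1 := by simp [asc]

lemma β_zero (l : ℕ) : β 0 l = 1 := by simp [β]

lemma β_row (k l : ℕ) : β (k+1) l = asc (k+1) l * β k l := by
  unfold β
  rw [List.range_succ_eq_map]
  simp only [List.map_cons, List.prod_cons, List.map_map, Nat.sub_zero]
  congr 1
  apply congrArg
  apply List.map_congr_left
  intro r _
  simp only [Function.comp_apply]
  congr 1
  omega

lemma β_col_zero (k : ℕ) : β k 0 = 1 := by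
  induction k with
  | zero => exact β_zero 0
  | succ k ih => rw [β_row, asc_zero, one_mul, ih]

lemma d_succ (j : ℕ) : β (j+1) 1 = σ (j+1) * β j 1 := by
  rw [β_row, asc_one]

lemma d_zero : β 0 1 = 1 := β_zero 1

lemma commute_σ_d {i j : ℕ} (h : j + 2 ≤ i) : Commute (σ i) (β j 1) := by
  induction j with
  | zero => rw [d_zero]; exact Commute.one_right _
  | succ j ih =>
    rw [d_succ]
    exact ((σ_comm (by omega) h).symm).mul_right (ih (by omega))

lemma σ_mul_d {i l : ℕ} (h1 : 1 ≤ i) (h2 : i < l) : σ i * β l 1 = β l 1 * σ (i+1) := by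
  induction l with
  | zero => omega
  | succ l ih =>
    rcases Nat.lt_or_ge i l with hl | hl
    · rw [d_succ, ← mul_assoc, (σ_comm h1 (by omega)).eq, mul_assoc, ih hl, ← mul_assoc]
    · -- i = l
      have hil : i = l := by omega
      subst hil
      obtain ⟨i', rfl⟩ : ∃ i', i = i' + 1 := ⟨i - 1, by omega⟩
      rw [d_succ, d_succ]
      have hc : Commute (σ (i'+1+1)) (β i' 1) := commute_σ_d (by omega)
      calc σ (i'+1) * (σ (i'+1+1) * (σ (i'+1) * β i' 1))
          = (σ (i'+1) * σ (i'+2) * σ (i'+1)) * β i' 1 := by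
            simp only [mul_assoc]
        _ = (σ (i'+2) * σ (i'+1) * σ (i'+2)) * β i' 1 := by rw [σ_braid]
        _ = σ (i'+1+1) * (σ (i'+1) * (σ (i'+2) * β i' 1)) := by
            simp only [mul_assoc]
        _ = σ (i'+1+1) * (σ (i'+1) * (β i' 1 * σ (i'+2))) := by rw [hc.eq]
        _ = σ (i'+1+1) * (σ (i'+1) * β i' 1) * σ (i'+1+1) := by
            simp only [mul_assoc]

lemma d_mul_d {j l : ℕ} (h : j < l) : β j 1 * β l 1 = β l 1 * shift 1 (β j 1) := by
  induction j with
  | zero => simp [d_zero]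
  | succ j ih =>
    rw [d_succ, mul_assoc, ih (by omega), ← mul_assoc, σ_mul_d (by omega) h, mul_assoc,
      map_mul, shift_σ 1 (by omega : 1 ≤ j + 1)]

lemma shift_d_zero (l : ℕ) : shift l (β 0 1) = 1 := by rw [d_zero, map_one]

lemma shift_d_succ (l j : ℕ) : shift l (β (j+1) 1) = σ (j+1+l) * shift l (β j 1) := by
  rw [d_succ, map_mul, shift_σ l (by omega)]

lemma shift_shift_d (l j m : ℕ) : shift l (shift j (β m 1)) = shift (j + l) (β m 1) := by
  induction m with
  | zero => rw [shift_d_zero, map_one, shift_d_zero]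
  | succ m ih =>
    rw [shift_d_succ, map_mul, shift_σ l (by omega), ih, shift_d_succ]
    congr 2
    omega

lemma d_split (p q : ℕ) : β (p + q) 1 = shift q (β p 1) * β q 1 := by
  induction p with
  | zero => rw [shift_d_zero, one_mul, Nat.zero_add]
  | succ p ih =>
    have h : p + 1 + q = (p + q) + 1 := by omega
    rw [h, d_succ, ih, ← mul_assoc, shift_d_succ]
    congr 3
    omega

lemma commute_σ_shift_d {i l : ℕ} (m : ℕ) (hi : 1 ≤ i) (h : i + 1 ≤ l) :
    Commute (σ i) (shift l (β m 1)) := by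
  induction m with
  | zero => rw [shift_d_zero]; exact Commute.one_right _
  | succ m ih =>
    rw [shift_d_succ]
    exact (σ_comm hi (by omega)).mul_right ih

lemma commute_d_shift_d {a l : ℕ} (m : ℕ) (h : a + 1 ≤ l) :
    Commute (β a 1) (shift l (β m 1)) := by
  induction a with
  | zero => rw [d_zero]; exact Commute.one_left _
  | succ a ih =>
    rw [d_succ]
    exact (commute_σ_shift_d m (by omega) (by omega)).mul_left (ih (by omega))

lemma commute_σ_asc {i p l : ℕ} (h : p + l + 1 ≤ i) (hp : 1 ≤ p) : Commute (σ i) (asc p l) := by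
  induction l with
  | zero => rw [asc_zero]; exact Commute.one_right _
  | succ l ih =>
    rw [asc_succ]
    exact (ih (by omega)).mul_right ((σ_comm (by omega) (by omega)).symm)

lemma commute_σ_β {i k a : ℕ} (h : k + a + 1 ≤ i) : Commute (σ i) (β k a) := by
  induction k with
  | zero => rw [β_zero]; exact Commute.one_right _
  | succ k ih =>
    rw [β_row]
    exact (commute_σ_asc (by omega) (by omega)).mul_right (ih (by omega))

lemma commute_shiftd_β {k a l : ℕ} (m : ℕ) (h : k + a ≤ l) :
    Commute (shift l (β m 1)) (β k a) := by
  induction m with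
  | zero => rw [shift_d_zero]; exact Commute.one_left _
  | succ m ih =>
    rw [shift_d_succ]
    exact Commute.mul_left (commute_σ_β (show k + a + 1 ≤ m + 1 + l by omega)) ih

lemma β_col (k a : ℕ) : β k (a+1) = β k a * shift a (β k 1) := by
  induction k with
  | zero => rw [β_zero, β_zero, shift_d_zero, one_mul]
  | succ k ih =>
    rw [β_row, β_row, ih, asc_succ, shift_d_succ]
    have hc : Commute (σ (k+1+a)) (β k a) := commute_σ_β (by omega)
    calc asc (k+1) a * σ (k+1+a) * (β k a * shift a (β k 1))
        = asc (k+1) a * ((σ (k+1+a) * β k a) * shift a (β k 1)) := by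
          simp only [mul_assoc]
      _ = asc (k+1) a * ((β k a * σ (k+1+a)) * shift a (β k 1)) := by rw [hc.eq]
      _ = asc (k+1) a * β k a * (σ (k+1+a) * shift a (β k 1)) := by
          simp only [mul_assoc]

lemma G1 (k a m : ℕ) : β k a * shift a (β (k+m) 1) = shift (a+k) (β m 1) * β k (a+1) := by
  have h1 : β (k + m) 1 = shift k (β m 1) * β k 1 := by
    have h2 := d_split m k
    rw [Nat.add_comm m k] at h2
    exact h2
  have h3 : a + k = k + a := Nat.add_comm a k
  rw [h1, map_mul, shift_shift_d, ← mul_assoc, h3,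
    ((commute_shiftd_β m (le_refl (k+a))).symm.eq : β k a * shift (k+a) (β m 1) = _),
    mul_assoc, ← β_col]

end Lemmas
section AlgLemmas

lemma ι_mul (g h : BInf) : ι 𝕜 (g * h) = ι 𝕜 g * ι 𝕜 h := map_mul (MonoidAlgebra.of 𝕜 BInf) g h

lemma ι_one : ι 𝕜 (1 : BInf) = 1 := map_one (MonoidAlgebra.of 𝕜 BInf)

lemma shiftA_ι (l : ℕ) (g : BInf) : shiftA 𝕜 l (ι 𝕜 g) = ι 𝕜 (shift l g) := by
  simp [shiftA, ι, MonoidAlgebra.mapDomainAlgHom_apply, MonoidAlgebra.of_apply,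
    Finsupp.mapDomain_single]

lemma commute_ι {g h : BInf} (hc : Commute g h) : Commute (ι 𝕜 g) (ι 𝕜 h) := by
  unfold ι
  simpa [Commute, SemiconjBy, ← map_mul] using congrArg (MonoidAlgebra.of 𝕜 BInf) hc.eq

lemma Poch_zero (k : ℕ) (x y : 𝕜) : Poch 𝕜 k 0 x y = 1 := by simp [Poch]

lemma Poch_succ (k n : ℕ) (x y : 𝕜) :
    Poch 𝕜 k (n+1) x y = Poch 𝕜 k n x y *
      (algebraMap 𝕜 (MonoidAlgebra 𝕜 BInf) x -
        algebraMap 𝕜 (MonoidAlgebra 𝕜 BInf) y * ι 𝕜 (β (k+n) 1)) := by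
  simp [Poch, List.range_succ]

lemma shiftA_Poch_zero (l k : ℕ) (x y : 𝕜) : shiftA 𝕜 l (Poch 𝕜 k 0 x y) = 1 := by
  rw [Poch_zero, map_one]

lemma shiftA_Poch_succ (l k m : ℕ) (x y : 𝕜) :
    shiftA 𝕜 l (Poch 𝕜 k (m+1) x y) = shiftA 𝕜 l (Poch 𝕜 k m x y) *
      (algebraMap 𝕜 (MonoidAlgebra 𝕜 BInf) x -
        algebraMap 𝕜 (MonoidAlgebra 𝕜 BInf) y * ι 𝕜 (shift l (β (k+m) 1))) := by
  rw [Poch_succ, map_mul, map_sub, AlgHom.commutes, map_mul, AlgHom.commutes, shiftA_ι]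

lemma commute_algebraMap (x : 𝕜) (g : MonoidAlgebra 𝕜 BInf) :
    Commute g (algebraMap 𝕜 (MonoidAlgebra 𝕜 BInf) x) := (Algebra.commutes x g).symm

lemma commute_Poch {g : MonoidAlgebra 𝕜 BInf} (k m : ℕ) (x y : 𝕜)
    (h : ∀ t, t < m → Commute g (ι 𝕜 (β (k+t) 1))) : Commute g (Poch 𝕜 k m x y) := by
  induction m with
  | zero => rw [Poch_zero]; exact Commute.one_right _
  | succ m ih =>
    rw [Poch_succ]
    exact (ih fun t ht => h t (by omega)).mul_right
      (Commute.sub_right (commute_algebraMap 𝕜 x g)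
        ((commute_algebraMap 𝕜 y g).mul_right (h m (by omega))))

lemma commute_shiftA_Poch {g : MonoidAlgebra 𝕜 BInf} (l k m : ℕ) (x y : 𝕜)
    (h : ∀ t, t < m → Commute g (ι 𝕜 (shift l (β (k+t) 1)))) :
    Commute g (shiftA 𝕜 l (Poch 𝕜 k m x y)) := by
  induction m with
  | zero => rw [shiftA_Poch_zero]; exact Commute.one_right _
  | succ m ih =>
    rw [shiftA_Poch_succ]
    exact (ih fun t ht => h t (by omega)).mul_right
      (Commute.sub_right (commute_algebraMap 𝕜 x g)
        ((commute_algebraMap 𝕜 y g).mul_right (h m (by omega))))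

lemma factor_swap (a j l : ℕ) (x y : 𝕜) (hjl : j < l) :
    (algebraMap 𝕜 (MonoidAlgebra 𝕜 BInf) x -
        algebraMap 𝕜 (MonoidAlgebra 𝕜 BInf) y * ι 𝕜 (shift a (β j 1))) * ι 𝕜 (shift a (β l 1)) =
      ι 𝕜 (shift a (β l 1)) * (algebraMap 𝕜 (MonoidAlgebra 𝕜 BInf) x -
        algebraMap 𝕜 (MonoidAlgebra 𝕜 BInf) y * ι 𝕜 (shift (a+1) (β j 1))) := by
  have hg : shift a (β j 1) * shift a (β l 1) = shift a (β l 1) * shift (a+1) (β j 1) := by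
    have h1 := congrArg (shift a) (d_mul_d hjl)
    rw [map_mul, map_mul, shift_shift_d] at h1
    rw [h1, Nat.add_comm 1 a]
  rw [sub_mul, mul_sub, mul_assoc, ← ι_mul, hg, ι_mul,
    (commute_algebraMap 𝕜 x (ι 𝕜 (shift a (β l 1)))).eq, ← mul_assoc, ← mul_assoc,
    (commute_algebraMap 𝕜 y (ι 𝕜 (shift a (β l 1)))).eq]

lemma swap (a k m l : ℕ) (x y : 𝕜) (h : k + m ≤ l) :
    shiftA 𝕜 a (Poch 𝕜 k m x y) * ι 𝕜 (shift a (β l 1)) =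
      ι 𝕜 (shift a (β l 1)) * shiftA 𝕜 (a+1) (Poch 𝕜 k m x y) := by
  induction m with
  | zero => rw [shiftA_Poch_zero, shiftA_Poch_zero, one_mul, mul_one]
  | succ m ih =>
    rw [shiftA_Poch_succ, shiftA_Poch_succ, mul_assoc, factor_swap 𝕜 a (k+m) l x y (by omega),
      ← mul_assoc, ih (by omega), mul_assoc]

end AlgLemmas
section KeyLemma

lemma reassoc {M : Type*} [Semigroup M] {a b b' a' : M} (h : a * b = b' * a') (c : M) :
    a * (b * c) = b' * (a' * c) := by rw [← mul_assoc, h, mul_assoc]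

lemma key (k a m : ℕ) (x y z : 𝕜) :
    ι 𝕜 (β k a) * (Poch 𝕜 0 a y z * (shiftA 𝕜 a (Poch 𝕜 k m x y) *
      (algebraMap 𝕜 (MonoidAlgebra 𝕜 BInf) x -
        algebraMap 𝕜 (MonoidAlgebra 𝕜 BInf) z * ι 𝕜 (β (k+m+a) 1)))) =
    ι 𝕜 (β k a) * (Poch 𝕜 0 a y z * shiftA 𝕜 a (Poch 𝕜 k (m+1) x y)) +
    ι 𝕜 (shift (a+k) (β m 1) * β k (a+1)) *
      (Poch 𝕜 0 (a+1) y z * shiftA 𝕜 (a+1) (Poch 𝕜 k m x y)) := by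
  set A := MonoidAlgebra 𝕜 BInf
  set Cx := algebraMap 𝕜 A x with hCx
  set Cy := algebraMap 𝕜 A y with hCy
  set Cz := algebraMap 𝕜 A z with hCz
  set D : A := ι 𝕜 (shift a (β (k+m) 1)) with hD
  set F2 : A := Cy - Cz * ι 𝕜 (β a 1) with hF2
  -- the split of the last Pochhammer factor
  have hsplit : Cx - Cz * ι 𝕜 (β (k+m+a) 1) = (Cx - Cy * D) + D * F2 := by
    have hd : β (k+m+a) 1 = shift a (β (k+m) 1) * β a 1 := d_split (k+m) a
    rw [hF2, mul_sub, ← (commute_algebraMap 𝕜 y D).eq,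
      reassoc ((commute_algebraMap 𝕜 z D).eq) (ι 𝕜 (β a 1)), ← ι_mul, ← hd,
      sub_add_sub_cancel]
  -- second piece transformation
  have hE : ι 𝕜 (β k a) * (Poch 𝕜 0 a y z * (shiftA 𝕜 a (Poch 𝕜 k m x y) * (D * F2))) =
      ι 𝕜 (shift (a+k) (β m 1) * β k (a+1)) *
        (Poch 𝕜 0 (a+1) y z * shiftA 𝕜 (a+1) (Poch 𝕜 k m x y)) := by
    have e1 := swap 𝕜 a k m (k+m) x y (le_refl _)
    have e2 : Commute F2 (shiftA 𝕜 (a+1) (Poch 𝕜 k m x y)) := by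
      apply commute_shiftA_Poch
      intro t ht
      exact Commute.sub_left (commute_algebraMap 𝕜 y _).symm
        (Commute.mul_left (commute_algebraMap 𝕜 z _).symm
          (commute_ι 𝕜 (commute_d_shift_d (k+t) (le_refl (a+1)))))
    have e3 : Commute D (Poch 𝕜 0 a y z) := by
      apply commute_Poch
      intro t ht
      have hc := (commute_d_shift_d (a := t) (l := a) (k+m) (by omega)).symm
      simpa using commute_ι 𝕜 hc
    have e5 : Poch 𝕜 0 (a+1) y z = Poch 𝕜 0 a y z * F2 := by
      rw [hF2]
      have := Poch_succ 𝕜 0 a y z; rw [Nat.zero_add] at this; exact this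
    rw [reassoc e1 F2, (e2.symm.eq : shiftA 𝕜 (a+1) (Poch 𝕜 k m x y) * F2 = _),
      reassoc (e3.symm.eq) (F2 * shiftA 𝕜 (a+1) (Poch 𝕜 k m x y)),
      ← mul_assoc (Poch 𝕜 0 a y z) F2 (shiftA 𝕜 (a+1) (Poch 𝕜 k m x y)), ← e5,
      ← mul_assoc (ι 𝕜 (β k a)) D _, ← ι_mul, G1]
  rw [hsplit]
  simp only [mul_add]
  rw [← shiftA_Poch_succ, hE]

end KeyLemma
section MainLemmas

lemma Sh_zero_left (n : ℕ) : Sh 𝕜 0 n = 1 := by rw [Sh]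

lemma Sh_left_zero (m : ℕ) : Sh 𝕜 m 0 = 1 := by
  cases m with
  | zero => rw [Sh]
  | succ m => rw [Sh]

lemma Sh_succ_succ (m n : ℕ) :
    Sh 𝕜 (m+1) (n+1) = Sh 𝕜 m (n+1) + Sh 𝕜 (m+1) n * ι 𝕜 (shift n (β (m+1) 1)) := by
  rw [Sh]

/-- The `U`-part of a summand in the inductive step. -/
noncomputable def Uaux (k n a : ℕ) (x y z : 𝕜) : MonoidAlgebra 𝕜 BInf :=
  shiftA 𝕜 k (Sh 𝕜 (n - a) a) *
    (ι 𝕜 (β k a) * (Poch 𝕜 0 a y z * shiftA 𝕜 a (Poch 𝕜 k ((n - a)+1) x y)))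

/-- The `W`-part of a summand in the inductive step. -/
noncomputable def Waux (k n a : ℕ) (x y z : 𝕜) : MonoidAlgebra 𝕜 BInf :=
  shiftA 𝕜 k (Sh 𝕜 (n - a) a) * (ι 𝕜 (shift (a+k) (β (n - a) 1) * β k (a+1)) *
    (Poch 𝕜 0 (a+1) y z * shiftA 𝕜 (a+1) (Poch 𝕜 k (n - a) x y)))

lemma perterm (k n a : ℕ) (ha : a ≤ n) (x y z : 𝕜) :
    (shiftA 𝕜 k (Sh 𝕜 (n - a) a) * ι 𝕜 (β k a) * Poch 𝕜 0 a y z *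
      shiftA 𝕜 a (Poch 𝕜 k (n - a) x y)) *
      (algebraMap 𝕜 (MonoidAlgebra 𝕜 BInf) x -
        algebraMap 𝕜 (MonoidAlgebra 𝕜 BInf) z * ι 𝕜 (β (k+n) 1)) =
    Uaux 𝕜 k n a x y z + Waux 𝕜 k n a x y z := by
  have hm : k + (n - a) + a = k + n := by omega
  have hkey := key 𝕜 k a (n - a) x y z
  rw [hm] at hkey
  calc (shiftA 𝕜 k (Sh 𝕜 (n - a) a) * ι 𝕜 (β k a) * Poch 𝕜 0 a y z *
      shiftA 𝕜 a (Poch 𝕜 k (n - a) x y)) *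
      (algebraMap 𝕜 (MonoidAlgebra 𝕜 BInf) x -
        algebraMap 𝕜 (MonoidAlgebra 𝕜 BInf) z * ι 𝕜 (β (k+n) 1))
      = shiftA 𝕜 k (Sh 𝕜 (n - a) a) * (ι 𝕜 (β k a) * (Poch 𝕜 0 a y z *
          (shiftA 𝕜 a (Poch 𝕜 k (n - a) x y) *
            (algebraMap 𝕜 (MonoidAlgebra 𝕜 BInf) x -
              algebraMap 𝕜 (MonoidAlgebra 𝕜 BInf) z * ι 𝕜 (β (k+n) 1))))) := by
        simp only [mul_assoc]
    _ = Uaux 𝕜 k n a x y z + Waux 𝕜 k n a x y z := by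
        rw [hkey, mul_add, Uaux, Waux]

lemma T_zero (k n : ℕ) (x y z : 𝕜) :
    shiftA 𝕜 k (Sh 𝕜 (n + 1 - 0) 0) * ι 𝕜 (β k 0) * Poch 𝕜 0 0 y z *
      shiftA 𝕜 0 (Poch 𝕜 k (n + 1 - 0) x y) = Uaux 𝕜 k n 0 x y z := by
  rw [Uaux]
  simp only [Nat.sub_zero, Sh_left_zero, mul_assoc]

lemma T_last (k n : ℕ) (x y z : 𝕜) :
    shiftA 𝕜 k (Sh 𝕜 (n + 1 - (n + 1)) (n + 1)) * ι 𝕜 (β k (n + 1)) * Poch 𝕜 0 (n + 1) y z *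
      shiftA 𝕜 (n + 1) (Poch 𝕜 k (n + 1 - (n + 1)) x y) = Waux 𝕜 k n n x y z := by
  rw [Waux]
  simp only [Nat.sub_self, Sh_zero_left, shift_d_zero, one_mul, mul_assoc]

lemma T_mid (k n b : ℕ) (hb : b < n) (x y z : 𝕜) :
    shiftA 𝕜 k (Sh 𝕜 (n + 1 - (b + 1)) (b + 1)) * ι 𝕜 (β k (b + 1)) * Poch 𝕜 0 (b + 1) y z *
      shiftA 𝕜 (b + 1) (Poch 𝕜 k (n + 1 - (b + 1)) x y)
    = Uaux 𝕜 k n (b + 1) x y z + Waux 𝕜 k n b x y z := by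
  have h1 : n + 1 - (b + 1) = (n - b - 1) + 1 := by omega
  have h2 : n - b - 1 = n - (b + 1) := by omega
  have h3 : (n - b - 1) + 1 = n - b := by omega
  rw [h1, Sh_succ_succ, map_add, add_mul, add_mul, add_mul]
  congr 1
  · rw [Uaux, h2]
    simp only [mul_assoc]
  · rw [Waux, h3, map_mul, shiftA_ι, shift_shift_d, Nat.add_comm b k, ι_mul]
    simp only [mul_assoc]

end MainLemmas
/-- Lemma: for all `k, n ≥ 0` and scalars `x, y, z`,
`P_{k,n}(x,z) = Σ_{a=0}^{n} Ш_{n-a,a}^{↑k} β_{k,a} P_{0,a}(y,z) P_{k,n-a}(x,y)^{↑a}`. -/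
theorem pochhammer_decomposition (k n : ℕ) (x y z : 𝕜) :
    Poch 𝕜 k n x z =
      ∑ a ∈ Finset.range (n + 1),
        shiftA 𝕜 k (Sh 𝕜 (n - a) a) * ι 𝕜 (β k a) * Poch 𝕜 0 a y z *
          shiftA 𝕜 a (Poch 𝕜 k (n - a) x y) := by
  induction n with
  | zero =>
    rw [Finset.sum_range_one, Poch_zero]
    simp [Sh_zero_left, β_col_zero, ι_one, Poch_zero]
  | succ n ih =>
    symm
    calc ∑ a ∈ Finset.range (n + 1 + 1),
          shiftA 𝕜 k (Sh 𝕜 (n + 1 - a) a) * ι 𝕜 (β k a) * Poch 𝕜 0 a y z *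
            shiftA 𝕜 a (Poch 𝕜 k (n + 1 - a) x y)
        = (∑ b ∈ Finset.range n, (Uaux 𝕜 k n (b+1) x y z + Waux 𝕜 k n b x y z)
            + Uaux 𝕜 k n 0 x y z) + Waux 𝕜 k n n x y z := by
          rw [Finset.sum_range_succ, Finset.sum_range_succ', T_zero, T_last]
          congr 2
          exact Finset.sum_congr rfl fun b hb => T_mid 𝕜 k n b (Finset.mem_range.mp hb) x y z
      _ = ∑ a ∈ Finset.range (n + 1), (Uaux 𝕜 k n a x y z + Waux 𝕜 k n a x y z) := by
          rw [Finset.sum_add_distrib, Finset.sum_add_distrib,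
            Finset.sum_range_succ' (fun a => Uaux 𝕜 k n a x y z) n,
            Finset.sum_range_succ (fun a => Waux 𝕜 k n a x y z) n]
          abel
      _ = ∑ a ∈ Finset.range (n + 1),
            (shiftA 𝕜 k (Sh 𝕜 (n - a) a) * ι 𝕜 (β k a) * Poch 𝕜 0 a y z *
              shiftA 𝕜 a (Poch 𝕜 k (n - a) x y)) *
            (algebraMap 𝕜 (MonoidAlgebra 𝕜 BInf) x -
              algebraMap 𝕜 (MonoidAlgebra 𝕜 BInf) z * ι 𝕜 (β (k+n) 1)) := by
          refine Finset.sum_congr rfl fun a ha => ?_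
          have ha' : a ≤ n := by have := Finset.mem_range.mp ha; omega
          exact (perterm 𝕜 k n a ha' x y z).symm
      _ = Poch 𝕜 k (n + 1) x z := by
          rw [← Finset.sum_mul, ← ih, ← Poch_succ]

end BraidPaper
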